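/- For every integer $n \ge 1$ and real $\nu > en$, the upper incomplete gamma function satisfies $\Gamma(n+1, \nu) < e^{-(e-2)n} \cdot \Gamma(n+1)$. -/

import Mathlib

open MeasureTheory Set Filter

/-- The upper incomplete gamma function `Γ(a,z) = ∫_z^∞ t^(a-1) e^(-t) dt`. -/
noncomputable def uGamma (a z : ℝ) : ℝ := ∫ t in Ioi z, t ^ (a - 1) * Real.exp (-t)

lemma integrableOn_pow_mul_exp_neg (k : ℕ) (ν : ℝ) (hν : 0 < ν) :
    IntegrableOn (fun t : ℝ => t ^ k * Real.exp (-t)) (Ioi ν) := by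
  have h := Real.GammaIntegral_convergent (s := (k : ℝ) + 1) (by positivity)
  have h2 : IntegrableOn (fun t : ℝ => t ^ k * Real.exp (-t)) (Ioi 0) := by
    refine h.congr_fun ?_ measurableSet_Ioi
    intro x hx
    simp only [add_sub_cancel_right, Real.rpow_natCast]
    ring
  exact h2.mono_set (Ioi_subset_Ioi hν.le)

lemma tail_le (n : ℕ) (hn : 1 ≤ n) (B ν : ℝ) (hB : 1 < B) (hν0 : 0 < ν)
    (h : B * n ≤ (B - 1) * ν) :
    ∫ t in Ioi ν, t ^ n * Real.exp (-t) ≤ B * (ν ^ n * Real.exp (-ν)) := by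
  have hder : ∀ x : ℝ, HasDerivAt (fun t => -(B * (t ^ n * Real.exp (-t))))
      (B * (x ^ n * Real.exp (-x)) - B * n * (x ^ (n - 1) * Real.exp (-x))) x := by
    intro x
    have h1 : HasDerivAt (fun t : ℝ => Real.exp (-t)) (-Real.exp (-x)) x := by
      simpa using ((hasDerivAt_id x).neg).exp
    have h2 := (hasDerivAt_pow n x).mul h1
    have h3 : HasDerivAt (fun t => -(B * (t ^ n * Real.exp (-t)))) _ x := (h2.const_mul B).neg
    convert h3 using 1
    ring
  have hint_g : IntegrableOn
      (fun t : ℝ => B * (t ^ n * Real.exp (-t)) - B * n * (t ^ (n - 1) * Real.exp (-t)))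
      (Ioi ν) :=
    ((integrableOn_pow_mul_exp_neg n ν hν0).const_mul B).sub
      ((integrableOn_pow_mul_exp_neg (n - 1) ν hν0).const_mul (B * n))
  have htend : Tendsto (fun t : ℝ => -(B * (t ^ n * Real.exp (-t)))) atTop (nhds 0) := by
    have := ((Real.tendsto_pow_mul_exp_neg_atTop_nhds_zero n).const_mul B).neg
    simpa using this
  have hFTC : ∫ t in Ioi ν,
      (B * (t ^ n * Real.exp (-t)) - B * n * (t ^ (n - 1) * Real.exp (-t)))
      = B * (ν ^ n * Real.exp (-ν)) := by
    have := integral_Ioi_of_hasDerivAt_of_tendsto' (a := ν) (fun x _ => hder x) hint_g htend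
    simpa using this
  rw [← hFTC]
  refine setIntegral_mono_on (integrableOn_pow_mul_exp_neg n ν hν0) hint_g
    measurableSet_Ioi ?_
  intro t ht
  have htν : ν < t := ht
  have ht0 : 0 < t := lt_trans hν0 htν
  have hkey : t ≤ B * t - B * n := by
    nlinarith [mul_le_mul_of_nonneg_left htν.le (show (0:ℝ) ≤ B - 1 by linarith)]
  have hnn : 0 ≤ t ^ (n - 1) * Real.exp (-t) := by positivity
  have hpow : t ^ (n - 1) * t = t ^ n := pow_sub_one_mul (by omega) t
  calc t ^ n * Real.exp (-t) = (t ^ (n - 1) * Real.exp (-t)) * t := by rw [← hpow]; ring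
    _ ≤ (t ^ (n - 1) * Real.exp (-t)) * (B * t - B * n) :=
        mul_le_mul_of_nonneg_left hkey hnn
    _ = B * (t ^ n * Real.exp (-t)) - B * n * (t ^ (n - 1) * Real.exp (-t)) := by
        rw [← hpow]; ring

lemma decay (n : ℕ) (hn : 1 ≤ n) (x : ℝ) (hx : Real.exp 1 * n ≤ x) :
    x ^ n * Real.exp (-x) ≤ (Real.exp 1 * n) ^ n * Real.exp (-(Real.exp 1 * n)) := by
  set E := Real.exp 1 with hE
  have hE2 : 2 < E := by
    have := Real.exp_one_gt_d9; linarith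
  have hn0 : (0:ℝ) < n := by exact_mod_cast hn
  set a : ℝ := E * n with ha
  have ha0 : 0 < a := by positivity
  have hxa : a ≤ x := hx
  have hx0 : 0 < x := lt_of_lt_of_le ha0 hxa
  have h1 : x / a ≤ Real.exp (x / a - 1) := by
    have := Real.add_one_le_exp (x / a - 1); linarith
  have hx_eq : x = a * (x / a) := by field_simp
  have h2 : x ^ n ≤ a ^ n * Real.exp ((n : ℝ) * (x / a - 1)) := by
    calc x ^ n = a ^ n * (x / a) ^ n := by rw [← mul_pow, ← hx_eq]
      _ ≤ a ^ n * Real.exp (x / a - 1) ^ n := by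
          gcongr
      _ = a ^ n * Real.exp ((n : ℝ) * (x / a - 1)) := by rw [Real.exp_nat_mul]
  have h3 : (n : ℝ) * (x / a - 1) ≤ x - a := by
    have hna : (n : ℝ) * (x / a) = x / E := by
      rw [ha]; field_simp
    have hdiv : x / E ≤ x - E * n + n := by
      rw [div_le_iff₀ (Real.exp_pos 1)]
      nlinarith [mul_le_mul_of_nonneg_left hxa (show (0:ℝ) ≤ E - 1 by linarith)]
    have : (n : ℝ) * (x / a - 1) = x / E - n := by rw [mul_sub, hna]; ring
    rw [this, ha]; linarith
  calc x ^ n * Real.exp (-x) ≤ (a ^ n * Real.exp ((n : ℝ) * (x / a - 1))) * Real.exp (-x) := by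
        gcongr
    _ ≤ (a ^ n * Real.exp (x - a)) * Real.exp (-x) := by
        gcongr
    _ = a ^ n * Real.exp (-a) := by
        rw [mul_assoc, ← Real.exp_add]; ring_nf

lemma fact_lb (n : ℕ) (hn : 1 ≤ n) :
    (n : ℝ) ^ n ≤ Real.exp ((n : ℝ) - 1) * n.factorial := by
  induction n, hn using Nat.le_induction with
  | base => simp
  | succ m hm ih =>
    have hm0 : (0:ℝ) < m := by exact_mod_cast hm
    have hinv : (m : ℝ) * (1 / m) = 1 := by field_simp
    have h1 : (m : ℝ) + 1 ≤ m * Real.exp (1 / m) := by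
      nlinarith [mul_le_mul_of_nonneg_left (Real.add_one_le_exp (1 / (m:ℝ))) hm0.le]
    have step : ((m : ℝ) + 1) ^ m ≤ Real.exp 1 * (m : ℝ) ^ m := by
      calc ((m : ℝ) + 1) ^ m ≤ ((m : ℝ) * Real.exp (1 / m)) ^ m :=
            pow_le_pow_left₀ (by positivity) h1 m
        _ = (m : ℝ) ^ m * Real.exp 1 := by
            rw [mul_pow, ← Real.exp_nat_mul, hinv]
        _ = Real.exp 1 * (m : ℝ) ^ m := by ring
    rw [Nat.factorial_succ]
    push_cast
    calc ((m : ℝ) + 1) ^ (m + 1) = ((m : ℝ) + 1) ^ m * ((m : ℝ) + 1) := pow_succ _ _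
      _ ≤ (Real.exp 1 * (m : ℝ) ^ m) * ((m : ℝ) + 1) :=
          mul_le_mul_of_nonneg_right step (by positivity)
      _ ≤ (Real.exp 1 * (Real.exp ((m : ℝ) - 1) * m.factorial)) * ((m : ℝ) + 1) := by
          gcongr
      _ = Real.exp ((m : ℝ) + 1 - 1) * (((m : ℝ) + 1) * m.factorial) := by
          rw [show ((m : ℝ) + 1 - 1) = 1 + ((m : ℝ) - 1) by ring, Real.exp_add]; ring

theorem uGamma_tail_bound (n : ℕ) (hn : 1 ≤ n) (ν : ℝ) (hν : Real.exp 1 * n < ν) :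
    uGamma (n + 1) ν < Real.exp (-(Real.exp 1 - 2) * n) * Real.Gamma (n + 1) := by
  set E := Real.exp 1 with hE
  have hE2 : 2 < E := by have := Real.exp_one_gt_d9; rw [hE]; linarith
  have hn0 : (0:ℝ) < n := by exact_mod_cast hn
  have hν0 : (0:ℝ) < ν := lt_trans (by positivity) hν
  set B : ℝ := E / (E - 1) with hB
  have hE1 : (0:ℝ) < E - 1 := by linarith
  have hB1 : 1 < B := by rw [hB, lt_div_iff₀ hE1]; linarith
  have hBE : B < E := by rw [hB, div_lt_iff₀ hE1]; nlinarith
  have hBν : B * n ≤ (B - 1) * ν := by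
    have hB1' : B - 1 = 1 / (E - 1) := by rw [hB]; field_simp; ring
    have hBn : B * n = E * n / (E - 1) := by rw [hB]; ring
    rw [hB1', hBn]
    rw [div_le_iff₀ hE1]
    have : (1 / (E - 1)) * ν * (E - 1) = ν := by field_simp
    rw [this]
    exact hν.le
  have h0 : uGamma (n + 1) ν = ∫ t in Ioi ν, t ^ n * Real.exp (-t) := by
    unfold uGamma
    congr 1 with t
    rw [add_sub_cancel_right, Real.rpow_natCast]
  have h1 : uGamma (n + 1) ν ≤ B * (ν ^ n * Real.exp (-ν)) := by
    rw [h0]; exact tail_le n hn B ν hB1 hν0 hBν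
  have h2 : ν ^ n * Real.exp (-ν) ≤ (E * n) ^ n * Real.exp (-(E * n)) :=
    decay n hn ν hν.le
  have hGamma : Real.Gamma (n + 1) = n.factorial := by
    exact_mod_cast Real.Gamma_nat_eq_factorial n
  have hfact : (n : ℝ) ^ n * Real.exp (1 - n) ≤ n.factorial := by
    have h := fact_lb n hn
    have := mul_le_mul_of_nonneg_right h (Real.exp_pos (1 - (n:ℝ))).le
    calc (n : ℝ) ^ n * Real.exp (1 - n) ≤
          (Real.exp ((n : ℝ) - 1) * n.factorial) * Real.exp (1 - n) := this
      _ = n.factorial * (Real.exp ((n : ℝ) - 1) * Real.exp (1 - (n:ℝ))) := by ring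
      _ = n.factorial := by rw [← Real.exp_add]; simp
  have hEn : E ^ n * Real.exp (-(E * n)) = Real.exp (-(E - 1) * n) := by
    rw [hE, ← Real.exp_nat_mul, ← Real.exp_add]
    congr 1; ring
  have hkey : B * ((E * n) ^ n * Real.exp (-(E * n)))
      < Real.exp (-(E - 2) * n) * ((n : ℝ) ^ n * Real.exp (1 - n)) := by
    have lhs_eq : B * ((E * n) ^ n * Real.exp (-(E * n)))
        = (n : ℝ) ^ n * (B * Real.exp (-(E - 1) * n)) := by
      rw [mul_pow]
      rw [show E ^ n * (n:ℝ) ^ n * Real.exp (-(E * n))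
          = (n:ℝ) ^ n * (E ^ n * Real.exp (-(E * n))) by ring, hEn]
      ring
    have rhs_eq : Real.exp (-(E - 2) * n) * ((n : ℝ) ^ n * Real.exp (1 - n))
        = (n : ℝ) ^ n * (E * Real.exp (-(E - 1) * n)) := by
      have hmul : Real.exp (-(E - 2) * n) * Real.exp (1 - n) = E * Real.exp (-(E - 1) * n) := by
        rw [← Real.exp_add, hE, ← Real.exp_add]
        congr 1; ring
      rw [show Real.exp (-(E - 2) * ↑n) * ((n : ℝ) ^ n * Real.exp (1 - ↑n))
          = (n : ℝ) ^ n * (Real.exp (-(E - 2) * ↑n) * Real.exp (1 - ↑n)) from by ring, hmul]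
    rw [lhs_eq, rhs_eq]
    have : B * Real.exp (-(E - 1) * n) < E * Real.exp (-(E - 1) * n) :=
      mul_lt_mul_of_pos_right hBE (Real.exp_pos _)
    exact mul_lt_mul_of_pos_left this (by positivity)
  have hBpos : 0 < B := lt_trans one_pos hB1
  calc uGamma (n + 1) ν ≤ B * (ν ^ n * Real.exp (-ν)) := h1
    _ ≤ B * ((E * n) ^ n * Real.exp (-(E * n))) := by gcongr
    _ < Real.exp (-(E - 2) * n) * ((n : ℝ) ^ n * Real.exp (1 - n)) := hkey
    _ ≤ Real.exp (-(E - 2) * n) * n.factorial := by gcongr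
    _ = Real.exp (-(E - 2) * n) * Real.Gamma (n + 1) := by rw [hGamma]
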